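/- arXiv:1411.1453 — 2 statements merged into one kernel-verified Lean document; each statement's English description precedes it below -/
import Mathlib

section
/- Let δ > 0 and let J and k be natural numbers with 1 ≤ k ≤ J. Define α_j = 2^{-|j-k|δ} + (1 - 2^{-(J-k)δ}) 2^{-(J-j)δ} for 1 ≤ j ≤ J. Then: (a) α_J = 1; (b) α_k ≥ 1, so α_j dominates the Kronecker delta sequence δ_{jk}; (c) the sequence is slowly varying, i.e. 2^{-δ} ≤ α_j/α_{j-1} ≤ 2^{δ} for all 2 ≤ j ≤ J; and (d) the sum ∑_{j=1}^{J} α_j is bounded by a constant depending only on δ (e.g., by 4/(1 - 2^{-δ})), uniformly in k and J. -/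
open Finset

private lemma rpow_nat_eq (δ : ℝ) (n : ℕ) :
    (2:ℝ) ^ (-(n:ℝ) * δ) = ((2:ℝ) ^ (-δ)) ^ n := by
  rw [← Real.rpow_natCast ((2:ℝ) ^ (-δ)) n, ← Real.rpow_mul (by norm_num : (0:ℝ) ≤ 2)]
  ring_nf

private lemma sum_pow_le' {q : ℝ} (hq0 : 0 ≤ q) (hq1 : q < 1) (t : Finset ℕ) :
    ∑ i ∈ t, q ^ i ≤ (1 - q)⁻¹ := by
  calc ∑ i ∈ t, q ^ i ≤ ∑' i : ℕ, q ^ i :=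
        Summable.sum_le_tsum t (fun i _ => pow_nonneg hq0 i) (summable_geometric_of_lt_one hq0 hq1)
    _ = (1 - q)⁻¹ := tsum_geometric_of_lt_one hq0 hq1

private lemma sum_pow_f_le {q : ℝ} (hq0 : 0 ≤ q) (hq1 : q < 1) (t : Finset ℕ) (f : ℕ → ℕ)
    (hf : ∀ x ∈ t, ∀ y ∈ t, f x = f y → x = y) : ∑ j ∈ t, q ^ f j ≤ (1 - q)⁻¹ := by
  calc ∑ j ∈ t, q ^ f j = ∑ i ∈ t.image f, q ^ i := (Finset.sum_image hf).symm
    _ ≤ (1 - q)⁻¹ := sum_pow_le' hq0 hq1 _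

/-- Slowly varying majorant of the Kronecker delta sequence. -/
theorem stmt_0 (δ : ℝ) (hδ : 0 < δ) (J k : ℕ) (hk1 : 1 ≤ k) (hkJ : k ≤ J)
    (α : ℕ → ℝ)
    (hα : ∀ j, 1 ≤ j → j ≤ J →
      α j = (2 : ℝ) ^ (-(((|(j : ℤ) - (k : ℤ)| : ℤ) : ℝ)) * δ)
        + (1 - (2 : ℝ) ^ (-(((J : ℝ) - (k : ℝ))) * δ)) * (2 : ℝ) ^ (-(((J : ℝ) - (j : ℝ))) * δ)) :
    α J = 1 ∧
    1 ≤ α k ∧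
    (∀ j, 2 ≤ j → j ≤ J →
      (2 : ℝ) ^ (-δ) ≤ α j / α (j - 1) ∧ α j / α (j - 1) ≤ (2 : ℝ) ^ δ) ∧
    (∑ j ∈ Finset.Icc 1 J, α j) ≤ 4 / (1 - (2 : ℝ) ^ (-δ)) := by
  set q : ℝ := (2:ℝ) ^ (-δ) with hqdef
  have hq0 : 0 < q := Real.rpow_pos_of_pos (by norm_num) _
  have hq1 : q < 1 := by
    rw [hqdef]
    exact Real.rpow_lt_one_of_one_lt_of_neg (by norm_num) (by linarith)
  set c : ℝ := 1 - (2:ℝ) ^ (-((J:ℝ) - (k:ℝ)) * δ) with hcdef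
  have hJk0 : (0:ℝ) ≤ (J:ℝ) - (k:ℝ) := by
    have : (k:ℝ) ≤ (J:ℝ) := by exact_mod_cast hkJ
    linarith
  have hc0 : 0 ≤ c := by
    have h1 : (2:ℝ) ^ (-((J:ℝ) - (k:ℝ)) * δ) ≤ 1 := by
      apply Real.rpow_le_one_of_one_le_of_nonpos (by norm_num)
      nlinarith
    rw [hcdef]; linarith
  have hc1 : c ≤ 1 := by
    have : (0:ℝ) < (2:ℝ) ^ (-((J:ℝ) - (k:ℝ)) * δ) := Real.rpow_pos_of_pos (by norm_num) _
    rw [hcdef]; linarith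
  -- α in q-power form
  have hαq : ∀ j, 1 ≤ j → j ≤ J →
      α j = q ^ ((j:ℤ) - (k:ℤ)).natAbs + c * q ^ (J - j) := by
    intro j h1 h2
    rw [hα j h1 h2]
    congr 1
    · rw [← rpow_nat_eq]
      congr 2
      push_cast [Nat.cast_natAbs]
      ring
    · congr 1
      rw [← rpow_nat_eq]
      congr 2
      have : ((J - j : ℕ) : ℝ) = (J:ℝ) - (j:ℝ) := by
        push_cast [h2]
        ring
      rw [this]
  have hcq : c = 1 - q ^ (J - k) := by
    rw [hcdef, ← rpow_nat_eq]
    congr 2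
    have : ((J - k : ℕ) : ℝ) = (J:ℝ) - (k:ℝ) := by
      push_cast [hkJ]
      ring
    rw [this]
  have hk1J : 1 ≤ J := le_trans hk1 hkJ
  constructor
  · -- α J = 1
    have := hαq J hk1J le_rfl
    rw [this, hcq]
    have h1 : ((J:ℤ) - (k:ℤ)).natAbs = J - k := by omega
    rw [h1, Nat.sub_self]
    ring
  constructor
  · -- 1 ≤ α k
    have := hαq k hk1 hkJ
    rw [this]
    have h1 : ((k:ℤ) - (k:ℤ)).natAbs = 0 := by omega
    rw [h1]
    have : 0 ≤ c * q ^ (J - k) := mul_nonneg hc0 (pow_nonneg hq0.le _)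
    simp only [pow_zero]
    linarith
  constructor
  · -- slowly varying
    intro j hj2 hjJ
    have e1 := hαq j (by omega) hjJ
    have e2 := hαq (j-1) (by omega) (by omega)
    set m : ℕ := ((j:ℤ) - (k:ℤ)).natAbs with hm
    set m' : ℕ := (((j-1:ℕ):ℤ) - (k:ℤ)).natAbs with hm'
    have hmm1 : m ≤ m' + 1 := by omega
    have hmm2 : m' ≤ m + 1 := by omega
    have hJj : J - (j-1) = (J - j) + 1 := by omega
    have hApos : (0:ℝ) < q ^ m' := pow_pos hq0 _
    have hBnn : (0:ℝ) ≤ c * q ^ (J - (j-1)) := mul_nonneg hc0 (pow_nonneg hq0.le _)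
    have hprev : 0 < α (j-1) := by rw [e2]; linarith
    have hlow : q * α (j-1) ≤ α j := by
      rw [e1, e2, hJj]
      have h1 : q ^ (m' + 1) ≤ q ^ m := pow_le_pow_of_le_one hq0.le hq1.le hmm1
      have h2 : c * q ^ ((J - j) + 1 + 1) ≤ c * q ^ (J - j) :=
        mul_le_mul_of_nonneg_left (pow_le_pow_of_le_one hq0.le hq1.le (by omega)) hc0
      have := pow_succ q m'
      have := pow_succ q ((J-j)+1)
      nlinarith [pow_nonneg hq0.le m', pow_nonneg hq0.le ((J-j)+1)]
    have hhigh : q * α j ≤ α (j-1) := by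
      rw [e1, e2, hJj]
      have h1 : q ^ (m + 1) ≤ q ^ m' := pow_le_pow_of_le_one hq0.le hq1.le hmm2
      have := pow_succ q m
      have := pow_succ q (J - j)
      nlinarith [pow_nonneg hq0.le m, pow_nonneg hq0.le (J-j)]
    have hqinv : (2:ℝ) ^ δ * q = 1 := by
      rw [hqdef, ← Real.rpow_add (by norm_num)]
      simp
    have hgpos : (0:ℝ) < (2:ℝ) ^ δ := Real.rpow_pos_of_pos (by norm_num) _
    constructor
    · rw [le_div_iff₀ hprev]; exact hlow
    · rw [div_le_iff₀ hprev]
      nlinarith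
  · -- sum bound
    have hrw : ∑ j ∈ Finset.Icc 1 J, α j
        = ∑ j ∈ Finset.Icc 1 J, (q ^ ((j:ℤ) - (k:ℤ)).natAbs + c * q ^ (J - j)) :=
      Finset.sum_congr rfl (fun j hj => by
        rw [Finset.mem_Icc] at hj
        exact hαq j hj.1 hj.2)
    rw [hrw, Finset.sum_add_distrib]
    have hIcc : Finset.Icc 1 J = Finset.Ioc 0 J := by
      ext x; simp [Finset.mem_Icc, Finset.mem_Ioc]; omega
    have hS2 : ∑ j ∈ Finset.Icc 1 J, c * q ^ (J - j) ≤ (1 - q)⁻¹ := by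
      calc ∑ j ∈ Finset.Icc 1 J, c * q ^ (J - j)
          ≤ ∑ j ∈ Finset.Icc 1 J, q ^ (J - j) := by
            apply Finset.sum_le_sum
            intro i hi
            have := pow_nonneg hq0.le (J - i)
            nlinarith
        _ ≤ (1 - q)⁻¹ := by
            apply sum_pow_f_le hq0.le hq1
            intro x hx y hy h
            rw [Finset.mem_Icc] at hx hy
            omega
    have hS1 : ∑ j ∈ Finset.Icc 1 J, q ^ ((j:ℤ) - (k:ℤ)).natAbs ≤ (1-q)⁻¹ + (1-q)⁻¹ := by
      rw [hIcc, ← Finset.sum_Ioc_consecutive _ (Nat.zero_le k) hkJ]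
      have hA : ∑ j ∈ Finset.Ioc 0 k, q ^ ((j:ℤ) - (k:ℤ)).natAbs ≤ (1-q)⁻¹ := by
        apply sum_pow_f_le hq0.le hq1
        intro x hx y hy h
        rw [Finset.mem_Ioc] at hx hy
        omega
      have hB : ∑ j ∈ Finset.Ioc k J, q ^ ((j:ℤ) - (k:ℤ)).natAbs ≤ (1-q)⁻¹ := by
        apply sum_pow_f_le hq0.le hq1
        intro x hx y hy h
        rw [Finset.mem_Ioc] at hx hy
        omega
      linarith
    have hinvpos : (0:ℝ) < (1 - q)⁻¹ := by
      apply inv_pos.mpr; linarith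
    have : 4 / (1 - q) = 4 * (1 - q)⁻¹ := by ring
    rw [this]
    linarith
end

section
/- Let g : ℝ → ℝ satisfy, for every N ∈ ℕ, a bound |g(x)| ≤ C_N (1 + |x|)^{-N}. Let λ ≥ 1, let k ∈ [λ/2, 2λ], μ ∈ [k, k+1), and τ ∈ ℝ with −τ ∈ [λ/4, 4λ]. Then max(1, k^{-1}|k² − μ²|) · (1 + |k − √(−λτ)|) · |g(τ + λ^{-1}μ²)| ≤ C (1 + |τ + λ^{-1}μ²|)^{-2}, where C depends only on finitely many of the constants C_N and not on λ, k, μ, τ. -/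
set_option maxHeartbeats 1000000 in
/-- Rapid decay absorbs the weights `max(1, k⁻¹|k²−μ²|)` and `⟨k − √(−λτ)⟩`. -/
theorem stmt_7 (Cg : ℕ → ℝ) :
    ∃ C : ℝ, 0 < C ∧
      ∀ g : ℝ → ℝ, (∀ N : ℕ, ∀ x : ℝ, |g x| ≤ Cg N / (1 + |x|) ^ N) →
        ∀ lam k μ τ : ℝ, 1 ≤ lam →
          k ∈ Set.Icc (lam / 2) (2 * lam) → μ ∈ Set.Ico k (k + 1) →
          -τ ∈ Set.Icc (lam / 4) (4 * lam) →
          max 1 (k⁻¹ * |k ^ 2 - μ ^ 2|) * (1 + |k - Real.sqrt (-lam * τ)|)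
              * |g (τ + lam⁻¹ * μ ^ 2)|
            ≤ C / (1 + |τ + lam⁻¹ * μ ^ 2|) ^ 2 := by
  refine ⟨36 * max (Cg 3) 0 + 1, by positivity, ?_⟩
  intro g hg lam k μ τ hlam hk hμ hτ
  obtain ⟨hk1, hk2⟩ := hk
  obtain ⟨hμ1, hμ2⟩ := hμ
  obtain ⟨hτ1, hτ2⟩ := hτ
  have hlam0 : (0:ℝ) < lam := by linarith
  have hk0 : (0:ℝ) < k := by linarith
  set u := τ + lam⁻¹ * μ ^ 2 with hu
  have hU : (0:ℝ) < 1 + |u| := by positivity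
  -- first weight
  have habs : |k ^ 2 - μ ^ 2| = μ ^ 2 - k ^ 2 := by
    rw [abs_sub_comm, abs_of_nonneg]; nlinarith
  have hW1 : max 1 (k⁻¹ * |k ^ 2 - μ ^ 2|) ≤ 4 := by
    refine max_le (by norm_num) ?_
    rw [habs, inv_mul_le_iff₀ hk0]
    nlinarith
  -- sqrt facts
  have hlt : 0 ≤ -lam * τ := by nlinarith
  set s := Real.sqrt (-lam * τ) with hs
  have hs0 : 0 ≤ s := Real.sqrt_nonneg _
  have hs2 : s ^ 2 = -lam * τ := Real.sq_sqrt hlt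
  have hsge : lam / 2 ≤ s := by
    rw [hs]
    calc lam / 2 = Real.sqrt ((lam / 2) ^ 2) := (Real.sqrt_sq (by linarith)).symm
    _ ≤ Real.sqrt (-lam * τ) := Real.sqrt_le_sqrt (by nlinarith)
  -- second weight
  have hlamu : lam * u = lam * τ + μ ^ 2 := by
    rw [hu]; field_simp
  have hks : lam ≤ k + s := by linarith
  have hkey : |k - s| * (k + s) = |k ^ 2 - s ^ 2| := by
    rw [← abs_of_nonneg (show (0:ℝ) ≤ k + s by linarith), ← abs_mul]
    ring_nf
  have hdiff : |k ^ 2 - s ^ 2| ≤ lam * (|u| + 8) := by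
    have h1 : k ^ 2 - s ^ 2 = lam * u - (μ ^ 2 - k ^ 2) := by
      rw [hs2]; linarith [hlamu]
    rw [h1]
    calc |lam * u - (μ ^ 2 - k ^ 2)| ≤ |lam * u| + |μ ^ 2 - k ^ 2| := abs_sub _ _
    _ = lam * |u| + |k ^ 2 - μ ^ 2| := by rw [abs_mul, abs_of_pos hlam0, abs_sub_comm]
    _ ≤ lam * |u| + (2 * k + 1) := by rw [habs]; nlinarith
    _ ≤ lam * (|u| + 8) := by nlinarith
  have hW2 : 1 + |k - s| ≤ 9 * (1 + |u|) := by
    have h3 : |k - s| * lam ≤ lam * (|u| + 8) := by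
      calc |k - s| * lam ≤ |k - s| * (k + s) := by
            exact mul_le_mul_of_nonneg_left hks (abs_nonneg _)
      _ = |k ^ 2 - s ^ 2| := hkey
      _ ≤ lam * (|u| + 8) := hdiff
    have h4 : |k - s| ≤ |u| + 8 := by
      nlinarith [abs_nonneg (k - s)]
    nlinarith [abs_nonneg u]
  -- rapid decay
  have hg3 : |g u| ≤ Cg 3 / (1 + |u|) ^ 3 := hg 3 u
  have hCg3 : 0 ≤ Cg 3 := le_trans (abs_nonneg (g 0)) (by simpa using hg 3 0)
  calc max 1 (k⁻¹ * |k ^ 2 - μ ^ 2|) * (1 + |k - s|) * |g u|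
      ≤ 4 * (9 * (1 + |u|)) * (Cg 3 / (1 + |u|) ^ 3) := by
        have hnn1 : (0:ℝ) ≤ max 1 (k⁻¹ * |k ^ 2 - μ ^ 2|) :=
          le_trans zero_le_one (le_max_left _ _)
        gcongr
    _ = 36 * Cg 3 / (1 + |u|) ^ 2 := by field_simp; ring
    _ ≤ (36 * max (Cg 3) 0 + 1) / (1 + |u|) ^ 2 := by
        gcongr
        nlinarith [le_max_left (Cg 3) 0]
end
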